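/- Let W_{ℝ₊}: ℝ₊² → [0,1] be a symmetric A_{ℝ₊}-Lipschitz kernel, let t_N > 0 and W_{N}(u,v) = W_{ℝ₊}(u·t_N, v·t_N). Let u_1 ≤ … ≤ u_N be the order statistics of N i.i.d. Uniform[0,1] random variables and let P̄_N(u,v) = Σ_{i,j=1}^N W_{N}(u_i,u_j)·1{u ∈ I_i}·1{v ∈ I_j}. Then E‖P̄_N − W_{N}‖_{L²([0,1]²)} ≤ 2·A_{ℝ₊}·t_N/√(6N). -/

import Mathlib

open MeasureTheory Set ProbabilityTheory

noncomputable section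

/-- The `i`-th cell of the equal-spaced partition of `[0,1]` into `m` pieces. -/
def cell (m : ℕ) (i : Fin m) : Set ℝ :=
  if (i : ℕ) = m - 1 then Set.Icc ((m - 1 : ℝ) / m) 1
  else Set.Ico ((i : ℝ) / m) (((i : ℝ) + 1) / m)

/-- Piecewise-constant interpolation of a vector. -/
def interp (m : ℕ) (x : Fin m → ℝ) : ℝ → ℝ :=
  fun u => ∑ i, x i * (cell m i).indicator (fun _ => (1 : ℝ)) u

/-- Induced graphon (step kernel) of a matrix. -/
def interp2 (m : ℕ) (S : Fin m → Fin m → ℝ) : ℝ → ℝ → ℝ :=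
  fun u v => ∑ i, ∑ j, S i j * (cell m i).indicator (fun _ => (1 : ℝ)) u *
    (cell m j).indicator (fun _ => (1 : ℝ)) v

/-- L² norm on [0,1]. -/
def l2 (f : ℝ → ℝ) : ℝ := Real.sqrt (∫ u in Set.Icc (0 : ℝ) 1, (f u) ^ 2)

/-- L² norm on [0,1]². -/
def kl2 (W : ℝ → ℝ → ℝ) : ℝ :=
  Real.sqrt (∫ q in (Set.Icc (0 : ℝ) 1) ×ˢ (Set.Icc (0 : ℝ) 1), (W q.1 q.2) ^ 2)

/-- Graphon shift operator. -/
def shiftOp (W : ℝ → ℝ → ℝ) (X : ℝ → ℝ) : ℝ → ℝ :=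
  fun v => ∫ u in Set.Icc (0 : ℝ) 1, W u v * X u

/-- Iterated graphon shift. -/
def shiftIter (W : ℝ → ℝ → ℝ) (X : ℝ → ℝ) : ℕ → ℝ → ℝ
  | 0 => X
  | k + 1 => shiftOp W (shiftIter W X k)

/-- Graphon convolutional filter with taps `h`. -/
def gfilter {K : ℕ} (h : Fin K → ℝ) (W : ℝ → ℝ → ℝ) (X : ℝ → ℝ) : ℝ → ℝ :=
  fun v => ∑ k, h k * shiftIter W X k v

/-- Frequency response of a filter. -/
def freqResp {K : ℕ} (h : Fin K → ℝ) (lam : ℝ) : ℝ := ∑ k, h k * lam ^ (k : ℕ)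

/-- Graph convolutional filter with taps `h`. -/
def mfilter {K n : ℕ} (h : Fin K → ℝ) (S : Matrix (Fin n) (Fin n) ℝ) (x : Fin n → ℝ) :
    Fin n → ℝ :=
  ∑ k, h k • (S ^ (k : ℕ)).mulVec x

/-- `lam` is a nonzero eigenvalue of the integral operator with kernel `W` on `L²[0,1]`. -/
def IsEig (W : ℝ → ℝ → ℝ) (lam : ℝ) : Prop :=
  lam ≠ 0 ∧ ∃ φ : ℝ → ℝ, MemLp φ 2 (volume.restrict (Set.Icc (0 : ℝ) 1)) ∧
    ¬ (φ =ᵐ[volume.restrict (Set.Icc (0 : ℝ) 1)] 0) ∧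
    (∀ᵐ v ∂(volume.restrict (Set.Icc (0 : ℝ) 1)), shiftOp W φ v = lam * φ v)

/-- `Δh(λ) = min_k max_i |h(λ_i) - k|` over the eigenvalues of `W`. -/
def deltaH {K : ℕ} (h : Fin K → ℝ) (W : ℝ → ℝ → ℝ) : ℝ :=
  ⨅ k : ℝ, ⨆ lam ∈ {l : ℝ | IsEig W l}, |freqResp h lam - k|

/-- Bernoulli law with parameter `p`, as a measure on `ℝ` supported on `{0,1}`. -/
def bernoulliReal (p : ℝ) : Measure ℝ :=
  ENNReal.ofReal p • Measure.dirac 1 + ENNReal.ofReal (1 - p) • Measure.dirac 0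

/-- Graphon (WNN) neural network features, layer by layer. -/
def wnn (σ : ℝ → ℝ) (W : ℝ → ℝ → ℝ) (K : ℕ) (Fdim : ℕ → ℕ)
    (H : ℕ → ℕ → ℕ → Fin K → ℝ) (X0 : ℕ → ℝ → ℝ) : ℕ → ℕ → ℝ → ℝ
  | 0, f => X0 f
  | l + 1, f => fun u =>
      σ (∑ g ∈ Finset.range (Fdim l), gfilter (H l g f) W (wnn σ W K Fdim H X0 l g) u)

/-- Graph convolutional network features, layer by layer. -/
def gcn (σ : ℝ → ℝ) {n : ℕ} (S : Matrix (Fin n) (Fin n) ℝ) (K : ℕ) (Fdim : ℕ → ℕ)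
    (H : ℕ → ℕ → ℕ → Fin K → ℝ) (x0 : ℕ → Fin n → ℝ) : ℕ → ℕ → Fin n → ℝ
  | 0, f => x0 f
  | l + 1, f => fun i =>
      σ ((∑ g ∈ Finset.range (Fdim l), mfilter (H l g f) S (gcn σ S K Fdim H x0 l g)) i)

/-- `u ω` is the increasing rearrangement (order statistics) of `(v i ω)_i`. -/
def SortedVersion {Ω : Type*} {N : ℕ} (u : Ω → Fin N → ℝ) (v : Fin N → Ω → ℝ) : Prop :=
  ∀ ω, Monotone (u ω) ∧ ∃ σ : Equiv.Perm (Fin N), ∀ i, u ω i = v (σ i) ω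

/-- The family `v` is i.i.d. uniform on `[0,1]`. -/
def IIDUniform {Ω : Type*} [MeasurableSpace Ω] {N : ℕ} (v : Fin N → Ω → ℝ)
    (μ : Measure Ω) : Prop :=
  (∀ i, Measurable (v i)) ∧ iIndepFun v μ ∧
    ∀ i, μ.map (v i) = volume.restrict (Set.Icc (0 : ℝ) 1)

/-- Given `ω₁` (the latent features), the edge variables `e i j ω₁ : Ω₂ → ℝ` are symmetric,
conditionally independent over pairs `i ≤ j`, with `e i j ω₁ ∼ Bernoulli (W (u ω₁ i) (u ω₁ j))`. -/
def CondBernoulliAdj {Ω₁ Ω₂ : Type*} [MeasurableSpace Ω₂]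
    (μ₂ : Measure Ω₂) {N : ℕ} (e : Fin N → Fin N → Ω₁ → Ω₂ → ℝ)
    (W : ℝ → ℝ → ℝ) (u : Ω₁ → Fin N → ℝ) : Prop :=
  (∀ i j ω₁, Measurable (e i j ω₁)) ∧
  (∀ i j ω₁, e i j ω₁ = e j i ω₁) ∧
  (∀ ω₁, iIndepFun
    (fun q : {q : Fin N × Fin N // q.1 ≤ q.2} => e q.1.1 q.1.2 ω₁) μ₂) ∧
  (∀ i j ω₁, μ₂.map (e i j ω₁) = bernoulliReal (W (u ω₁ i) (u ω₁ j)))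

/-- `L₁ = ∫_{[0,t]²} W`. -/
def L1 (Wk : ℝ → ℝ → ℝ) (t : ℝ) : ℝ :=
  ∫ q in Set.Icc (0 : ℝ) t ×ˢ Set.Icc (0 : ℝ) t, Wk q.1 q.2

/-- `L₂² = ∫_{[0,t]²} W²`. -/
def L2sq (Wk : ℝ → ℝ → ℝ) (t : ℝ) : ℝ :=
  ∫ q in Set.Icc (0 : ℝ) t ×ˢ Set.Icc (0 : ℝ) t, (Wk q.1 q.2) ^ 2

section AuxKernelDisc
variable {N : ℕ}

lemma cell_meas (i : Fin N) : MeasurableSet (cell N i) := by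
  unfold cell; split <;> [exact measurableSet_Icc; exact measurableSet_Ico]

lemma mem_cell_bounds (hN : 0 < N) {i : Fin N} {s : ℝ} (hs : s ∈ cell N i) :
    (i : ℝ) / N ≤ s ∧ s ≤ ((i : ℝ) + 1) / N := by
  unfold cell at hs
  split at hs
  · rename_i h
    obtain ⟨h1, h2⟩ := hs
    have hiN : (i : ℝ) = (N : ℝ) - 1 := by
      have : ((i:ℕ) : ℝ) = ((N - 1 : ℕ) : ℝ) := by exact_mod_cast congrArg (fun n : ℕ => (n : ℝ)) h
      rwa [Nat.cast_sub hN, Nat.cast_one] at this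
    constructor
    · rw [hiN] at *; linarith [h1]
    · rw [hiN]
      have : ((N : ℝ) - 1 + 1) / N = 1 := by
        field_simp
        ring
      linarith [this ▸ h2]
  · exact ⟨hs.1, le_of_lt hs.2⟩

lemma cell_subset_Icc (hN : 0 < N) (i : Fin N) : cell N i ⊆ Icc (0:ℝ) 1 := by
  intro s hs
  obtain ⟨h1, h2⟩ := mem_cell_bounds hN hs
  have hNpos : (0:ℝ) < N := by exact_mod_cast hN
  have hi1 : (i:ℝ) + 1 ≤ N := by
    have := i.2; exact_mod_cast Nat.succ_le_of_lt this
  constructor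
  · have : (0:ℝ) ≤ (i:ℝ)/N := by positivity
    linarith
  · calc s ≤ ((i:ℝ)+1)/N := h2
      _ ≤ (N:ℝ)/N := by gcongr
      _ = 1 := div_self hNpos.ne'

lemma cell_lt (hN : 0 < N) {i j : Fin N} (hij : i < j) {s t : ℝ}
    (hi : s ∈ cell N i) (hj : t ∈ cell N j) : s < t := by
  have hNpos : (0:ℝ) < N := by exact_mod_cast hN
  have hiNe : (i : ℕ) ≠ N - 1 := by
    have hj2 := j.2
    omega
  have hsi : s < ((i:ℝ)+1)/N := by
    unfold cell at hi; rw [if_neg hiNe] at hi; exact hi.2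
  have htj : (j:ℝ)/N ≤ t := (mem_cell_bounds hN hj).1
  have hij' : (i:ℝ) + 1 ≤ (j:ℝ) := by exact_mod_cast hij
  calc s < ((i:ℝ)+1)/N := hsi
    _ ≤ (j:ℝ)/N := by gcongr
    _ ≤ t := htj

lemma cell_disjoint (hN : 0 < N) {i j : Fin N} (hij : i ≠ j) {s : ℝ}
    (hi : s ∈ cell N i) : s ∉ cell N j := by
  intro hj
  rcases lt_or_gt_of_ne hij with h | h
  · exact absurd (cell_lt hN h hi hj) (lt_irrefl s)
  · exact absurd (cell_lt hN h hj hi) (lt_irrefl s)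

lemma cell_exists (hN : 0 < N) {s : ℝ} (hs : s ∈ Icc (0:ℝ) 1) :
    ∃ i : Fin N, s ∈ cell N i := by
  have hNpos : (0:ℝ) < N := by exact_mod_cast hN
  by_cases hlast : ((N:ℝ) - 1)/N ≤ s
  · refine ⟨⟨N-1, by omega⟩, ?_⟩
    unfold cell
    rw [if_pos rfl]
    exact ⟨hlast, hs.2⟩
  · push_neg at hlast
    have h0 : (0:ℝ) ≤ s * N := by have := hs.1; positivity
    set k := ⌊s * N⌋₊ with hk
    have hk1 : (k:ℝ) ≤ s * N := Nat.floor_le h0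
    have hk2 : s * N < k + 1 := Nat.lt_floor_add_one _
    have hkN : (k : ℝ) < (N:ℝ) - 1 := by
      have : s * N < (N:ℝ) - 1 := by
        have := mul_lt_mul_of_pos_right hlast hNpos
        calc s * N < ((N:ℝ)-1)/N * N := this
          _ = (N:ℝ) - 1 := by field_simp
      linarith
    have hkN' : k < N - 1 := by
      have : (k:ℝ) < ((N-1:ℕ):ℝ) := by rw [Nat.cast_sub hN]; push_cast; linarith
      exact_mod_cast this
    refine ⟨⟨k, by omega⟩, ?_⟩
    unfold cell
    rw [if_neg (by simpa using hkN'.ne)]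
    constructor
    · rw [div_le_iff₀ hNpos]; simpa using hk1
    · rw [lt_div_iff₀ hNpos]; simpa using hk2

lemma integral_cell (hN : 0 < N) (i : Fin N) (c : ℝ) :
    ∫ s in cell N i, (c - s)^2 =
      ((c - (i:ℝ)/N)^3 - (c - ((i:ℝ)+1)/N)^3)/3 := by
  have hNpos : (0:ℝ) < N := by exact_mod_cast hN
  have hab : (i:ℝ)/N ≤ ((i:ℝ)+1)/N := by gcongr <;> linarith
  have key : ∀ a b : ℝ, a ≤ b → ∫ s in Set.Ioc a b, (c - s)^2 =
      ((c - a)^3 - (c - b)^3)/3 := by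
    intro a b hle
    rw [← intervalIntegral.integral_of_le hle]
    rw [show (∫ x in a..b, (c - x)^2) = ∫ x in (c-b)..(c-a), x^2 from
      intervalIntegral.integral_comp_sub_left (fun x => x^2) c]
    rw [integral_pow]
    ring
  have hIoc : ∫ s in Set.Ioc ((i:ℝ)/N) (((i:ℝ)+1)/N), (c - s)^2 =
      ((c - (i:ℝ)/N)^3 - (c - ((i:ℝ)+1)/N)^3)/3 := key _ _ hab
  unfold cell
  split
  · rename_i h
    have hiN : (i : ℝ) = (N : ℝ) - 1 := by
      have : ((i:ℕ) : ℝ) = ((N - 1 : ℕ) : ℝ) := by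
        exact_mod_cast congrArg (fun n : ℕ => (n : ℝ)) h
      rwa [Nat.cast_sub hN, Nat.cast_one] at this
    have hb : ((i:ℝ)+1)/N = 1 := by rw [hiN]; field_simp; ring
    rw [integral_Icc_eq_integral_Ioc]
    rw [show Set.Ioc (((N:ℝ) - 1)/N) 1 = Set.Ioc ((i:ℝ)/N) (((i:ℝ)+1)/N) by rw [hb, hiN]]
    exact hIoc
  · rw [setIntegral_congr_set Ico_ae_eq_Ioc]
    exact hIoc

/-- error profile -/
def eFun (N : ℕ) (x : Fin N → ℝ) (s : ℝ) : ℝ :=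
  ∑ i, (cell N i).indicator (fun s' => (x i - s')^2) s

lemma eFun_nonneg (x : Fin N → ℝ) (s : ℝ) : 0 ≤ eFun N x s :=
  Finset.sum_nonneg fun i _ => Set.indicator_nonneg (fun s' _ => sq_nonneg _) s

lemma eFun_meas (x : Fin N → ℝ) : Measurable (eFun N x) := by
  apply Finset.measurable_sum
  intro i _
  exact Measurable.indicator (by fun_prop) (cell_meas i)

lemma eFun_collapse (hN : 0 < N) (x : Fin N → ℝ) {s : ℝ} {i₀ : Fin N}
    (hs : s ∈ cell N i₀) : eFun N x s = (x i₀ - s)^2 := by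
  unfold eFun
  rw [Finset.sum_eq_single i₀]
  · rw [Set.indicator_of_mem hs]
  · intro i _ hi
    rw [Set.indicator_of_notMem (fun h => cell_disjoint hN hi h hs)]
  · simp

lemma collapse_one (hN : 0 < N) {s : ℝ} {i₀ : Fin N} (hs : s ∈ cell N i₀)
    (f : Fin N → ℝ) :
    ∑ i, f i * (cell N i).indicator (fun _ => (1:ℝ)) s = f i₀ := by
  rw [Finset.sum_eq_single i₀]
  · rw [Set.indicator_of_mem hs]; ring
  · intro i _ hi
    rw [Set.indicator_of_notMem (fun h => cell_disjoint hN hi h hs)]; ring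
  · simp

lemma interp2_collapse (hN : 0 < N) (M : Fin N → Fin N → ℝ) {s t : ℝ}
    {i₀ j₀ : Fin N} (hs : s ∈ cell N i₀) (ht : t ∈ cell N j₀) :
    interp2 N M s t = M i₀ j₀ := by
  unfold interp2
  have : ∀ i, ∑ j, M i j * (cell N i).indicator (fun _ => (1:ℝ)) s *
      (cell N j).indicator (fun _ => (1:ℝ)) t
      = M i j₀ * (cell N i).indicator (fun _ => (1:ℝ)) s := by
    intro i
    exact collapse_one hN ht (fun j => M i j * (cell N i).indicator (fun _ => (1:ℝ)) s)
  simp_rw [this]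
  exact collapse_one hN hs (fun i => M i j₀)

lemma pointwise_bound (hN : 0 < N) {A tN : ℝ} (hA : 0 ≤ A) (htN : 0 < tN)
    {Wk : ℝ → ℝ → ℝ}
    (hWlip : ∀ a b c d : ℝ, 0 ≤ a → 0 ≤ b → 0 ≤ c → 0 ≤ d →
      |Wk a b - Wk c d| ≤ A * (|a - c| + |b - d|))
    {x : Fin N → ℝ} (hx : ∀ i, x i ∈ Icc (0:ℝ) 1)
    {s t : ℝ} (hs : s ∈ Icc (0:ℝ) 1) (ht : t ∈ Icc (0:ℝ) 1) :
    (interp2 N (fun i j => Wk (x i * tN) (x j * tN)) s t - Wk (s * tN) (t * tN))^2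
      ≤ 2 * (A * tN)^2 * (eFun N x s + eFun N x t) := by
  obtain ⟨i₀, hi₀⟩ := cell_exists hN hs
  obtain ⟨j₀, hj₀⟩ := cell_exists hN ht
  rw [interp2_collapse hN _ hi₀ hj₀, eFun_collapse hN x hi₀, eFun_collapse hN x hj₀]
  have habs : |Wk (x i₀ * tN) (x j₀ * tN) - Wk (s * tN) (t * tN)|
      ≤ A * tN * (|x i₀ - s| + |x j₀ - t|) := by
    have h1 := hWlip (x i₀ * tN) (x j₀ * tN) (s * tN) (t * tN)
      (mul_nonneg (hx i₀).1 htN.le) (mul_nonneg (hx j₀).1 htN.le)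
      (mul_nonneg hs.1 htN.le) (mul_nonneg ht.1 htN.le)
    have e1 : |x i₀ * tN - s * tN| = |x i₀ - s| * tN := by
      rw [← sub_mul, abs_mul, abs_of_pos htN]
    have e2 : |x j₀ * tN - t * tN| = |x j₀ - t| * tN := by
      rw [← sub_mul, abs_mul, abs_of_pos htN]
    calc _ ≤ A * (|x i₀ * tN - s * tN| + |x j₀ * tN - t * tN|) := h1
      _ = A * tN * (|x i₀ - s| + |x j₀ - t|) := by rw [e1, e2]; ring
  have h2 : (Wk (x i₀ * tN) (x j₀ * tN) - Wk (s * tN) (t * tN))^2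
      ≤ (A * tN * (|x i₀ - s| + |x j₀ - t|))^2 := by
    rw [← sq_abs]
    apply pow_le_pow_left₀ (abs_nonneg _) habs
  refine h2.trans ?_
  have ha := sq_abs (x i₀ - s)
  have hb := sq_abs (x j₀ - t)
  nlinarith [sq_nonneg (|x i₀ - s| - |x j₀ - t|), sq_nonneg (A * tN), abs_nonneg (x i₀ - s),
    abs_nonneg (x j₀ - t), mul_nonneg (mul_nonneg hA htN.le) (abs_nonneg (x i₀ - s))]

/-- integral of the error profile -/
lemma integral_eFun (hN : 0 < N) (x : Fin N → ℝ) :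
    ∫ s in Icc (0:ℝ) 1, eFun N x s
      = (1/N) * (∑ i, (x i)^2) - (1/N^2) * (∑ i : Fin N, (2*(i:ℝ)+1) * x i) + 1/3 := by
  have hNpos : (0:ℝ) < N := by exact_mod_cast hN
  have hint : ∀ i : Fin N, IntegrableOn
      ((cell N i).indicator (fun s' => (x i - s')^2)) (Icc (0:ℝ) 1) := by
    intro i
    apply Integrable.indicator _ (cell_meas i)
    exact (Continuous.integrableOn_Icc (by fun_prop))
  have : ∫ s in Icc (0:ℝ) 1, eFun N x s
      = ∑ i, ∫ s in Icc (0:ℝ) 1, (cell N i).indicator (fun s' => (x i - s')^2) s :=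
    integral_finset_sum _ (fun i _ => hint i)
  rw [this]
  have heach : ∀ i : Fin N, ∫ s in Icc (0:ℝ) 1, (cell N i).indicator
      (fun s' => (x i - s')^2) s
      = (x i)^2/N - (x i)*(2*(i:ℝ)+1)/N^2 + (((i:ℝ)+1)^3 - (i:ℝ)^3)/(3*N^3) := by
    intro i
    rw [setIntegral_indicator (cell_meas i),
      Set.inter_eq_self_of_subset_right (cell_subset_Icc hN i), integral_cell hN i]
    field_simp
    ring
  simp_rw [heach]
  rw [Finset.sum_add_distrib, Finset.sum_sub_distrib]
  have h3 : ∑ i : Fin N, (((i:ℝ)+1)^3 - (i:ℝ)^3)/(3*N^3) = 1/3 := by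
    rw [← Finset.sum_div]
    rw [Fin.sum_univ_eq_sum_range (fun i => (((i:ℝ)+1)^3 - (i:ℝ)^3))]
    have := Finset.sum_range_sub (fun i : ℕ => ((i:ℝ))^3) N
    simp only [Nat.cast_add, Nat.cast_one] at this
    rw [this]
    field_simp
    ring
  rw [h3]
  rw [show ∑ i : Fin N, (x i)^2/N = (1/N) * (∑ i, (x i)^2) by
    rw [Finset.mul_sum]; exact Finset.sum_congr rfl fun i _ => by ring]
  rw [show ∑ i : Fin N, (x i)*(2*(i:ℝ)+1)/N^2 = (1/N^2) * (∑ i : Fin N, (2*(i:ℝ)+1) * x i) by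
    rw [Finset.mul_sum]; exact Finset.sum_congr rfl fun i _ => by ring]

lemma filter_card_eq {v w : Fin N → ℝ} (σ : Equiv.Perm (Fin N))
    (hvw : ∀ i, w i = v (σ i)) (p : ℝ → Prop) [DecidablePred p] :
    (Finset.univ.filter fun k => p (v k)).card
      = (Finset.univ.filter fun k => p (w k)).card := by
  apply Finset.card_bij (fun k _ => σ.symm k)
  · intro k hk
    simp only [Finset.mem_filter, Finset.mem_univ, true_and] at *
    rwa [hvw, Equiv.apply_symm_apply]
  · intro a ha b hb hab
    exact σ.symm.injective hab
  · intro b hb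
    refine ⟨σ b, ?_, by simp⟩
    simp only [Finset.mem_filter, Finset.mem_univ, true_and] at *
    rwa [hvw] at hb

lemma sorted_le_iff {v w : Fin N → ℝ} (hmono : Monotone w) (σ : Equiv.Perm (Fin N))
    (hvw : ∀ i, w i = v (σ i)) (i : Fin N) (x : ℝ) :
    w i ≤ x ↔ (i:ℕ) + 1 ≤ (Finset.univ.filter fun k => v k ≤ x).card := by
  rw [filter_card_eq σ hvw (fun y => y ≤ x)]
  constructor
  · intro h
    calc (i:ℕ) + 1 = (Finset.Iic i).card := (Fin.card_Iic i).symm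
      _ ≤ _ := by
        apply Finset.card_le_card
        intro k hk
        simp only [Finset.mem_Iic] at hk
        simp only [Finset.mem_filter, Finset.mem_univ, true_and]
        exact le_trans (hmono hk) h
  · intro h
    by_contra hx
    push_neg at hx
    have hsub : (Finset.univ.filter fun k => w k ≤ x) ⊆ Finset.Iio i := by
      intro k hk
      simp only [Finset.mem_filter, Finset.mem_univ, true_and] at hk
      simp only [Finset.mem_Iio]
      by_contra hik
      push_neg at hik
      exact absurd (le_trans (hmono hik) hk) (not_le.mpr hx)
    have := Finset.card_le_card hsub
    rw [Fin.card_Iio] at this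
    omega

lemma rank_eq {v w : Fin N → ℝ} (hmono : Monotone w) (σ : Equiv.Perm (Fin N))
    (hvw : ∀ i, w i = v (σ i)) (hinj : Function.Injective v) (i : Fin N) :
    (Finset.univ.filter fun k => v k < w i).card = (i:ℕ) := by
  have hwinj : Function.Injective w := by
    intro a b hab
    have : v (σ a) = v (σ b) := by rw [← hvw, ← hvw, hab]
    exact σ.injective (hinj this)
  have hstrict : StrictMono w := hmono.strictMono_of_injective hwinj
  rw [filter_card_eq σ hvw (fun y => y < w i)]
  have : (Finset.univ.filter fun k => w k < w i) = Finset.Iio i := by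
    ext k
    simp [hstrict.lt_iff_lt]
  rw [this, Fin.card_Iio]

lemma rank_sum_identity {v w : Fin N → ℝ} (hmono : Monotone w) (σ : Equiv.Perm (Fin N))
    (hvw : ∀ i, w i = v (σ i)) (hinj : Function.Injective v) :
    ∑ i : Fin N, (i:ℝ) * w i
      = ∑ j : Fin N, ∑ k : Fin N, (if v k < v j then v j else 0) := by
  have step1 : ∀ i : Fin N, (i:ℝ) * w i
      = ∑ k : Fin N, (if v k < w i then w i else 0) := by
    intro i
    rw [← rank_eq hmono σ hvw hinj i]
    rw [Finset.card_filter]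
    push_cast
    rw [Finset.sum_mul]
    congr 1
    ext k
    split <;> simp
  simp_rw [step1, hvw]
  exact Equiv.sum_comp σ (fun j => ∑ k : Fin N, (if v k < v j then v j else 0))

lemma measurable_sorted {Ω : Type*} [MeasurableSpace Ω] {v : Fin N → Ω → ℝ}
    (hv : ∀ k, Measurable (v k)) {u : Ω → Fin N → ℝ}
    (hord : ∀ ω, Monotone (u ω) ∧ ∃ σ : Equiv.Perm (Fin N), ∀ i, u ω i = v (σ i) ω)
    (i : Fin N) : Measurable (fun ω => u ω i) := by
  apply measurable_of_Iic
  intro x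
  have hset : (fun ω => u ω i) ⁻¹' Iic x
      = {ω | (i:ℕ) + 1 ≤ (Finset.univ.filter fun k => v k ω ≤ x).card} := by
    ext ω
    obtain ⟨hmono, σ, hvw⟩ := hord ω
    exact sorted_le_iff hmono σ (fun j => hvw j) i x
  rw [hset]
  have hcard : Measurable (fun ω => (Finset.univ.filter fun k => v k ω ≤ x).card) := by
    have : (fun ω => (Finset.univ.filter fun k => v k ω ≤ x).card)
        = fun ω => ∑ k : Fin N, (if v k ω ≤ x then 1 else 0) := by
      ext ω; rw [Finset.card_filter]
    rw [this]
    apply Finset.measurable_sum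
    intro k _
    exact Measurable.ite (measurableSet_le (hv k) measurable_const)
      measurable_const measurable_const
  exact hcard MeasurableSet.of_discrete

end AuxKernelDisc

section AuxProb
variable {N : ℕ}
abbrev unif : Measure ℝ := volume.restrict (Icc (0:ℝ) 1)

lemma unif_prob : IsProbabilityMeasure unif :=
  ⟨by rw [Measure.restrict_apply_univ, Real.volume_Icc]; norm_num⟩

lemma unif_compl : unif (Icc (0:ℝ) 1)ᶜ = 0 := by
  rw [Measure.restrict_apply (measurableSet_Icc.compl)]
  simp

lemma integral_unif_id : ∫ x, x ∂unif = 1/2 := by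
  show ∫ x in Icc (0:ℝ) 1, x = 1/2
  rw [integral_Icc_eq_integral_Ioc, ← intervalIntegral.integral_of_le zero_le_one]
  simp

lemma integral_unif_sq : ∫ x, x^2 ∂unif = 1/3 := by
  show ∫ x in Icc (0:ℝ) 1, x^2 = 1/3
  rw [integral_Icc_eq_integral_Ioc, ← intervalIntegral.integral_of_le zero_le_one,
    integral_pow]
  norm_num

lemma integrable_unif_id : Integrable (fun x => x) unif :=
  continuous_id.integrableOn_Icc

lemma integrable_unif_sq : Integrable (fun x => x^2) unif :=
  (continuous_pow 2).integrableOn_Icc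

variable {Ω : Type*} [MeasurableSpace Ω] {μ : Measure Ω} [IsProbabilityMeasure μ]
  {N : ℕ} {v : Fin N → Ω → ℝ}

lemma v_int (hv : ∀ k, Measurable (v k)) (hlaw : ∀ k, μ.map (v k) = unif) (j : Fin N) :
    Integrable (v j) μ ∧ ∫ ω, v j ω ∂μ = 1/2 := by
  constructor
  · have h := integrable_unif_id
    rw [← hlaw j] at h
    exact (integrable_map_measure (aestronglyMeasurable_id) (hv j).aemeasurable).mp h
  · have := integral_map (μ := μ) (φ := v j) (f := fun x => x) (hv j).aemeasurable
      (aestronglyMeasurable_id)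
    rw [hlaw j, integral_unif_id] at this
    exact this.symm

lemma v_sq_int (hv : ∀ k, Measurable (v k)) (hlaw : ∀ k, μ.map (v k) = unif) (j : Fin N) :
    Integrable (fun ω => (v j ω)^2) μ ∧ ∫ ω, (v j ω)^2 ∂μ = 1/3 := by
  have hg : AEStronglyMeasurable (fun x : ℝ => x^2) (μ.map (v j)) :=
    (continuous_pow 2).aestronglyMeasurable
  constructor
  · have h := integrable_unif_sq
    rw [← hlaw j] at h
    exact (integrable_map_measure hg (hv j).aemeasurable).mp h
  · have := integral_map (hv j).aemeasurable hg
    rw [hlaw j, integral_unif_sq] at this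
    exact this.symm

lemma v_in_Icc (hv : ∀ k, Measurable (v k)) (hlaw : ∀ k, μ.map (v k) = unif) :
    ∀ᵐ ω ∂μ, ∀ k, v k ω ∈ Icc (0:ℝ) 1 := by
  rw [MeasureTheory.ae_all_iff]
  intro k
  have : μ ((v k) ⁻¹' (Icc (0:ℝ) 1)ᶜ) = 0 := by
    rw [← Measure.map_apply (hv k) measurableSet_Icc.compl, hlaw k]
    exact unif_compl
  filter_upwards [measure_eq_zero_iff_ae_notMem.mp this] with ω hω
  simpa using hω

lemma map_pair (hv : ∀ k, Measurable (v k)) (hlaw : ∀ k, μ.map (v k) = unif)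
    (hind : iIndepFun v μ) {j k : Fin N} (hjk : j ≠ k) :
    μ.map (fun ω => (v j ω, v k ω)) = unif.prod unif := by
  have hs := hind.indepFun hjk
  rw [indepFun_iff_map_prod_eq_prod_map_map (hv j).aemeasurable (hv k).aemeasurable] at hs
  rw [hs, hlaw j, hlaw k]

lemma pair_distinct (hv : ∀ k, Measurable (v k)) (hlaw : ∀ k, μ.map (v k) = unif)
    (hind : iIndepFun v μ) {j k : Fin N} (hjk : j ≠ k) :
    ∀ᵐ ω ∂μ, v j ω ≠ v k ω := by
  have hD : MeasurableSet {p : ℝ × ℝ | p.1 = p.2} :=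
    measurableSet_eq_fun measurable_fst measurable_snd
  have h0 : μ {ω | v j ω = v k ω} = 0 := by
    have : {ω | v j ω = v k ω} = (fun ω => (v j ω, v k ω)) ⁻¹' {p : ℝ × ℝ | p.1 = p.2} :=
      rfl
    rw [this, ← Measure.map_apply ((hv j).prodMk (hv k)) hD,
      map_pair hv hlaw hind hjk, Measure.prod_apply hD]
    have : ∀ x : ℝ, unif (Prod.mk x ⁻¹' {p : ℝ × ℝ | p.1 = p.2}) = 0 := by
      intro x
      have : (Prod.mk x ⁻¹' {p : ℝ × ℝ | p.1 = p.2}) = {x} := by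
        ext y; simp [eq_comm]
      rw [this]
      exact le_antisymm ((Measure.restrict_le_self _).trans_eq (Real.volume_singleton))
        zero_le
    simp [this]
  filter_upwards [measure_eq_zero_iff_ae_notMem.mp h0] with ω hω
  simpa using hω

lemma pair_term_integrable_and_integral
    (hv : ∀ k, Measurable (v k)) (hlaw : ∀ k, μ.map (v k) = unif)
    (hind : iIndepFun v μ) {j k : Fin N} (hjk : j ≠ k) :
    Integrable (fun ω => if v k ω < v j ω then v j ω else 0) μ ∧
      ∫ ω, (if v k ω < v j ω then v j ω else 0) ∂μ = 1/3 := by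
  classical
  set F : ℝ × ℝ → ℝ := fun p => if p.2 < p.1 then p.1 else 0 with hF
  have hFmeas : Measurable F :=
    Measurable.ite (measurableSet_lt measurable_snd measurable_fst)
      measurable_fst measurable_const
  have hmap := map_pair hv hlaw hind hjk
  have hpair : Measurable (fun ω => (v j ω, v k ω)) := (hv j).prodMk (hv k)
  -- a.e. bound on the product measure
  have hae : ∀ᵐ p ∂(unif.prod unif), ‖F p‖ ≤ 1 := by
    have hnull : (unif.prod unif) ((Icc (0:ℝ) 1)ᶜ ×ˢ (univ : Set ℝ)) = 0 := by
      rw [Measure.prod_prod, unif_compl, zero_mul]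
    have hsub : {p : ℝ × ℝ | ¬ ‖F p‖ ≤ 1} ⊆ (Icc (0:ℝ) 1)ᶜ ×ˢ (univ : Set ℝ) := by
      intro p hp
      simp only [Set.mem_setOf_eq, not_le] at hp
      constructor
      · intro hmem
        have : ‖F p‖ ≤ 1 := by
          rw [hF]
          simp only
          split
          · rw [Real.norm_eq_abs, abs_of_nonneg hmem.1]; exact hmem.2
          · simp
        exact absurd this (not_le.mpr hp)
      · trivial
    have := measure_mono_null hsub hnull
    rwa [← MeasureTheory.ae_iff] at this  -- might need adjusting
  have hFint : Integrable F (unif.prod unif) := by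
    haveI := unif_prob
    exact Integrable.mono' (integrable_const 1) hFmeas.aestronglyMeasurable hae
  have hcomp : (fun ω => if v k ω < v j ω then v j ω else 0)
      = F ∘ (fun ω => (v j ω, v k ω)) := rfl
  have hint : Integrable (fun ω => if v k ω < v j ω then v j ω else 0) μ := by
    rw [hcomp]
    apply (integrable_map_measure hFmeas.aestronglyMeasurable hpair.aemeasurable).mp
    rw [hmap]; exact hFint
  refine ⟨hint, ?_⟩
  have h1 : ∫ ω, (if v k ω < v j ω then v j ω else 0) ∂μ = ∫ p, F p ∂(unif.prod unif) := by
    rw [hcomp, ← hmap]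
    exact (integral_map hpair.aemeasurable hFmeas.aestronglyMeasurable).symm
  rw [h1]
  haveI := unif_prob
  rw [MeasureTheory.integral_prod F hFint]
  have hinner : ∀ x : ℝ, ∫ y, F (x, y) ∂unif = (unif (Iio x)).toReal * x := by
    intro x
    have : (fun y => F (x, y)) = Set.indicator (Iio x) (fun _ => x) := by
      ext y
      rw [hF]
      simp only [Set.indicator_apply, Set.mem_Iio]
    rw [this, integral_indicator_const x measurableSet_Iio]
    simp [mul_comm, Measure.real]
  simp_rw [hinner]
  have hcongr : ∀ᵐ x ∂unif, (unif (Iio x)).toReal * x = x^2 := by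
    filter_upwards [ae_restrict_mem measurableSet_Icc] with x hx
    have : unif (Iio x) = ENNReal.ofReal x := by
      rw [Measure.restrict_apply measurableSet_Iio]
      have : Iio x ∩ Icc (0:ℝ) 1 = Ico 0 x := by
        ext y
        constructor
        · rintro ⟨h1, h2, _⟩; exact ⟨h2, h1⟩
        · rintro ⟨h1, h2⟩; exact ⟨h2, h1, le_trans h2.le hx.2⟩
      rw [this, Real.volume_Ico, sub_zero]
    rw [this, ENNReal.toReal_ofReal hx.1]
    ring
  rw [integral_congr_ae hcongr, integral_unif_sq]

end AuxProb

section AuxOmega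
variable {N : ℕ}
lemma eFun_le (hN : 0 < N) (x : Fin N → ℝ) (hx : ∀ i, x i ∈ Icc (0:ℝ) 1) {s : ℝ}
    (hs : s ∈ Icc (0:ℝ) 1) : eFun N x s ≤ N := by
  unfold eFun
  calc ∑ i, (cell N i).indicator (fun s' => (x i - s')^2) s
      ≤ ∑ _i : Fin N, (1:ℝ) := by
        apply Finset.sum_le_sum
        intro i _
        apply Set.indicator_le' (fun s' hs' => ?_) (fun _ _ => zero_le_one) s
        have h1 := (hx i).1; have h2 := (hx i).2
        have h3 := (cell_subset_Icc hN i hs').1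
        have h4 := (cell_subset_Icc hN i hs').2
        nlinarith
    _ = N := by simp

lemma eFun_integrable (hN : 0 < N) (x : Fin N → ℝ) (hx : ∀ i, x i ∈ Icc (0:ℝ) 1) :
    Integrable (eFun N x) unif := by
  haveI := unif_prob
  apply Integrable.mono' (integrable_const (N:ℝ)) (eFun_meas x).aestronglyMeasurable
  filter_upwards [ae_restrict_mem measurableSet_Icc] with s hs
  rw [Real.norm_eq_abs, abs_of_nonneg (eFun_nonneg x s)]
  exact eFun_le hN x hx hs

lemma omega_bound (hN : 0 < N) {A tN : ℝ} (hA : 0 ≤ A) (htN : 0 < tN)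
    {Wk : ℝ → ℝ → ℝ} (hWmeas : Measurable (Function.uncurry Wk))
    (hWlip : ∀ a b c d : ℝ, 0 ≤ a → 0 ≤ b → 0 ≤ c → 0 ≤ d →
      |Wk a b - Wk c d| ≤ A * (|a - c| + |b - d|))
    (x : Fin N → ℝ) (hx : ∀ i, x i ∈ Icc (0:ℝ) 1) :
    kl2 (fun s t => interp2 N (fun i j => Wk (x i * tN) (x j * tN)) s t
        - Wk (s * tN) (t * tN))
      ≤ 2 * (A * tN) * Real.sqrt (∫ s in Icc (0:ℝ) 1, eFun N x s) := by
  haveI := unif_prob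
  set C := A * tN with hCdef
  have hC : 0 ≤ C := mul_nonneg hA htN.le
  set Sv := ∫ s in Icc (0:ℝ) 1, eFun N x s with hSv
  have hSnn : 0 ≤ Sv := integral_nonneg (fun s => eFun_nonneg x s)
  set D : ℝ → ℝ → ℝ := fun s t =>
    interp2 N (fun i j => Wk (x i * tN) (x j * tN)) s t - Wk (s * tN) (t * tN) with hD
  set P : Set (ℝ × ℝ) := (Icc (0:ℝ) 1) ×ˢ (Icc (0:ℝ) 1) with hP
  have hPrestrict : (volume : Measure (ℝ × ℝ)).restrict P = unif.prod unif := by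
    rw [Measure.volume_eq_prod, Measure.prod_restrict]
  set B : ℝ × ℝ → ℝ := fun q => 2 * C^2 * (eFun N x q.1 + eFun N x q.2) with hB
  have hBmeas : Measurable B := by
    apply Measurable.const_mul
    exact ((eFun_meas x).comp measurable_fst).add ((eFun_meas x).comp measurable_snd)
  have hBint : Integrable B (unif.prod unif) := by
    haveI : IsProbabilityMeasure (unif.prod unif) := by infer_instance
    apply Integrable.mono' (integrable_const (2 * C^2 * (2*N))) hBmeas.aestronglyMeasurable
    have hmem : ∀ᵐ q ∂(unif.prod unif), q ∈ P := by
      rw [← hPrestrict]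
      exact ae_restrict_mem (measurableSet_Icc.prod measurableSet_Icc)
    filter_upwards [hmem] with q hq
    rw [Real.norm_eq_abs, hB]
    have h1 := eFun_le hN x hx hq.1
    have h2 := eFun_le hN x hx hq.2
    have g1 := eFun_nonneg x q.1
    have g2 := eFun_nonneg x q.2
    rw [abs_of_nonneg (by positivity)]
    have hhh : eFun N x q.1 + eFun N x q.2 ≤ 2*(N:ℝ) := by linarith
    exact mul_le_mul_of_nonneg_left hhh (by positivity)
  -- the integral of B over the product
  have hBval : ∫ q, B q ∂(unif.prod unif) = 4 * C^2 * Sv := by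
    rw [integral_prod B hBint]
    have hein := eFun_integrable hN x hx
    have inner : ∀ s : ℝ, ∫ t, B (s, t) ∂unif = 2*C^2 * eFun N x s + 2*C^2 * Sv := by
      intro s
      rw [hB]
      simp only
      rw [show (fun t => 2 * C^2 * (eFun N x s + eFun N x t))
          = fun t => (2 * C^2 * eFun N x s) + (2*C^2) * eFun N x t by ext t; ring]
      rw [integral_add (integrable_const _) (hein.const_mul _)]
      rw [integral_const, integral_const_mul]
      simp [hSv]
    simp_rw [inner]
    rw [integral_add (hein.const_mul _) (integrable_const _), integral_const_mul,
      integral_const]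
    simp only [Measure.real, measure_univ, ENNReal.toReal_one, smul_eq_mul, one_mul]
    rw [hSv]; ring
  -- measurability of the squared difference
  have hDmeas : Measurable (fun q : ℝ × ℝ => (D q.1 q.2)^2) := by
    apply Measurable.pow_const
    apply Measurable.sub
    · unfold interp2
      apply Finset.measurable_sum
      intro i _
      apply Finset.measurable_sum
      intro j _
      apply Measurable.mul
      · apply Measurable.mul measurable_const
        exact (Measurable.indicator measurable_const (cell_meas i)).comp measurable_fst
      · exact (Measurable.indicator measurable_const (cell_meas j)).comp measurable_snd
    · exact hWmeas.comp ((measurable_fst.mul_const tN).prodMk (measurable_snd.mul_const tN))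
  have hI2 : ∫ q in P, (D q.1 q.2)^2 ≤ 4 * C^2 * Sv := by
    have : ∫ q in P, (D q.1 q.2)^2 = ∫ q, (D q.1 q.2)^2 ∂(unif.prod unif) := by
      rw [← hPrestrict]
    rw [this, ← hBval]
    apply integral_mono_of_nonneg (Filter.Eventually.of_forall fun q => sq_nonneg _) hBint
    have hmem : ∀ᵐ q ∂(unif.prod unif), q ∈ P := by
      rw [← hPrestrict]
      exact ae_restrict_mem (measurableSet_Icc.prod measurableSet_Icc)
    filter_upwards [hmem] with q hq
    exact pointwise_bound hN hA htN hWlip hx hq.1 hq.2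
  have hk : kl2 D = Real.sqrt (∫ q in P, (D q.1 q.2)^2) := rfl
  show kl2 D ≤ 2 * C * Real.sqrt Sv
  rw [hk]
  calc Real.sqrt (∫ q in P, (D q.1 q.2)^2) ≤ Real.sqrt (4 * C^2 * Sv) :=
      Real.sqrt_le_sqrt hI2
    _ = 2 * C * Real.sqrt Sv := by
      rw [show 4 * C^2 * Sv = (2*C)^2 * Sv by ring, Real.sqrt_mul (sq_nonneg _),
        Real.sqrt_sq (by positivity)]

end AuxOmega

/-- expected L² error of the step kernel at order statistics of i.i.d.
uniforms: `E‖P̄_N − W_N‖ ≤ 2·A·t_N/√(6N)`. -/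
theorem expected_kernel_discretization_error {Ω : Type*} [MeasurableSpace Ω]
    (μ : Measure Ω) [IsProbabilityMeasure μ]
    (A tN : ℝ) (htN : 0 < tN) (Wk : ℝ → ℝ → ℝ)
    (hWmeas : Measurable (Function.uncurry Wk))
    (hWsym : ∀ a b, Wk a b = Wk b a)
    (hWrange : ∀ a b, 0 ≤ a → 0 ≤ b → Wk a b ∈ Set.Icc (0 : ℝ) 1)
    (hWlip : ∀ a b c d : ℝ, 0 ≤ a → 0 ≤ b → 0 ≤ c → 0 ≤ d →
      |Wk a b - Wk c d| ≤ A * (|a - c| + |b - d|))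
    (N : ℕ) (hN : 0 < N)
    (v : Fin N → Ω → ℝ) (hiid : IIDUniform v μ)
    (u : Ω → Fin N → ℝ) (hord : SortedVersion u v) :
    (∫ ω, kl2 (fun s t =>
        interp2 N (fun i j => Wk (u ω i * tN) (u ω j * tN)) s t - Wk (s * tN) (t * tN)) ∂μ)
      ≤ 2 * A * tN / Real.sqrt (6 * N) := by
  classical
  obtain ⟨hv, hind, hlaw⟩ := hiid
  haveI := unif_prob
  have hA : 0 ≤ A := by
    have h := hWlip 1 0 0 0 zero_le_one le_rfl le_rfl le_rfl
    have h0 : (0:ℝ) ≤ |Wk 1 0 - Wk 0 0| := abs_nonneg _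
    simp only [sub_zero, abs_one, abs_zero, sub_self] at h
    linarith
  have hNR : (0:ℝ) < N := by exact_mod_cast hN
  set C := A * tN with hCdef
  have hC : 0 ≤ C := mul_nonneg hA htN.le
  set c := Real.sqrt (1/(6*N)) with hcdef
  have hcpos : 0 < c := Real.sqrt_pos.mpr (by positivity)
  have hcsq : c^2 = 1/(6*N) := Real.sq_sqrt (by positivity)
  set S : Ω → ℝ := fun ω => ∫ s in Icc (0:ℝ) 1, eFun N (u ω) s with hSdef
  have hSformula : ∀ ω, S ω = (1/N) * (∑ i, (u ω i)^2)
      - (1/N^2) * (∑ i : Fin N, (2*(i:ℝ)+1) * u ω i) + 1/3 :=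
    fun ω => integral_eFun hN (u ω)
  have hSnn : ∀ ω, 0 ≤ S ω := fun ω => integral_nonneg fun s => eFun_nonneg _ s
  have hsum_sq : ∀ ω, (∑ i, (u ω i)^2) = ∑ j, (v j ω)^2 := by
    intro ω
    obtain ⟨hmono, σ, hvw⟩ := hord ω
    calc (∑ i, (u ω i)^2) = ∑ i, (v (σ i) ω)^2 := by
          exact Finset.sum_congr rfl fun i _ => by rw [hvw i]
      _ = ∑ j, (v j ω)^2 := Equiv.sum_comp σ (fun j => (v j ω)^2)
  have hsum_lin : ∀ ω, (∑ i, u ω i) = ∑ j, v j ω := by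
    intro ω
    obtain ⟨hmono, σ, hvw⟩ := hord ω
    calc (∑ i, u ω i) = ∑ i, v (σ i) ω := Finset.sum_congr rfl fun i _ => hvw i
      _ = ∑ j, v j ω := Equiv.sum_comp σ (fun j => v j ω)
  -- a.e. injectivity
  have hdist : ∀ᵐ ω ∂μ, Function.Injective (fun k => v k ω) := by
    have hpair : ∀ j k : Fin N, ∀ᵐ ω ∂μ, j ≠ k → v j ω ≠ v k ω := by
      intro j k
      by_cases hjk : j = k
      · exact Filter.Eventually.of_forall fun ω h => absurd hjk h
      · filter_upwards [pair_distinct hv hlaw hind hjk] with ω hω _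
        exact hω
    have := (ae_all_iff.mpr fun j => (ae_all_iff.mpr fun k => hpair j k))
    filter_upwards [this] with ω hω a b hab
    by_contra hne
    exact hω a b hne hab
  set PS : Ω → ℝ := fun ω => ∑ j : Fin N, ∑ k : Fin N,
    (if v k ω < v j ω then v j ω else 0) with hPSdef
  have hrank : ∀ᵐ ω ∂μ, (∑ i : Fin N, (i:ℝ) * u ω i) = PS ω := by
    filter_upwards [hdist] with ω hω
    obtain ⟨hmono, σ, hvw⟩ := hord ω
    exact rank_sum_identity hmono σ (fun i => hvw i) hω
  set T : Ω → ℝ := fun ω => (1/(N:ℝ)) * (∑ j, (v j ω)^2)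
      - (1/(N:ℝ)^2) * (2 * PS ω + ∑ j, v j ω) + 1/3 with hTdef
  have hST : S =ᵐ[μ] T := by
    filter_upwards [hrank] with ω hω
    rw [hSformula ω, hsum_sq ω]
    have hsplit : (∑ i : Fin N, (2*(i:ℝ)+1) * u ω i)
        = 2 * (∑ i : Fin N, (i:ℝ) * u ω i) + ∑ i, u ω i := by
      rw [Finset.mul_sum, ← Finset.sum_add_distrib]
      exact Finset.sum_congr rfl fun i _ => by ring
    rw [hsplit, hω, hsum_lin ω]
  -- integrability
  have hterm_int : ∀ j k : Fin N,
      Integrable (fun ω => if v k ω < v j ω then v j ω else 0) μ := by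
    intro j k
    by_cases hjk : j = k
    · subst hjk
      have : (fun ω => if v j ω < v j ω then v j ω else 0) = fun _ => (0:ℝ) := by
        ext ω; simp
      rw [this]
      exact integrable_const 0
    · exact (pair_term_integrable_and_integral hv hlaw hind hjk).1
  have hPSint : Integrable PS μ :=
    integrable_finset_sum _ fun j _ => integrable_finset_sum _ fun k _ => hterm_int j k
  have hQ2int : Integrable (fun ω => ∑ j, (v j ω)^2) μ :=
    integrable_finset_sum _ fun j _ => (v_sq_int hv hlaw j).1
  have hQ1int : Integrable (fun ω => ∑ j, v j ω) μ :=
    integrable_finset_sum _ fun j _ => (v_int hv hlaw j).1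
  have hTint' : Integrable (fun ω => (1/(N:ℝ)) * (∑ j, (v j ω)^2)
      - (1/(N:ℝ)^2) * (2 * PS ω + ∑ j, v j ω)) μ := by
    exact (hQ2int.const_mul _).sub (((hPSint.const_mul 2).add hQ1int).const_mul _)
  have hTint : Integrable T μ := by
    exact hTint'.add (integrable_const (1/3))
  have hSint : Integrable S μ := hTint.congr hST.symm
  -- value of ∫ T
  have hPSval : ∫ ω, PS ω ∂μ = (N:ℝ)*((N:ℝ)-1)/3 := by
    rw [hPSdef]
    rw [integral_finset_sum _ fun j _ => integrable_finset_sum _ fun k _ => hterm_int j k]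
    have : ∀ j : Fin N, ∫ ω, (∑ k : Fin N, if v k ω < v j ω then v j ω else 0) ∂μ
        = ∑ k : Fin N, if j = k then 0 else 1/3 := by
      intro j
      rw [integral_finset_sum _ fun k _ => hterm_int j k]
      apply Finset.sum_congr rfl
      intro k _
      by_cases hjk : j = k
      · subst hjk
        simp only [if_pos rfl]
        have : (fun ω => if v j ω < v j ω then v j ω else 0) = fun _ => (0:ℝ) := by
          ext ω; simp
        rw [this, integral_const]; simp
      · rw [if_neg hjk]
        exact (pair_term_integrable_and_integral hv hlaw hind hjk).2
    simp_rw [this]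
    have : ∀ j : Fin N, (∑ k : Fin N, if j = k then (0:ℝ) else 1/3)
        = (N:ℝ)/3 - 1/3 := by
      intro j
      have : (∑ k : Fin N, if j = k then (0:ℝ) else 1/3)
          = ∑ k : Fin N, ((1:ℝ)/3 - if j = k then 1/3 else 0) := by
        apply Finset.sum_congr rfl
        intro k _
        split <;> ring
      rw [this, Finset.sum_sub_distrib, Finset.sum_ite_eq]
      simp only [Finset.mem_univ, if_true, Finset.sum_const, Finset.card_univ,
        Fintype.card_fin, nsmul_eq_mul]
      ring
    simp_rw [this]
    rw [Finset.sum_const]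
    simp only [Finset.card_univ, Fintype.card_fin, nsmul_eq_mul]
    ring
  have hQ2val : ∫ ω, (∑ j, (v j ω)^2) ∂μ = (N:ℝ)/3 := by
    rw [integral_finset_sum _ fun j _ => (v_sq_int hv hlaw j).1]
    have : ∀ j : Fin N, ∫ ω, (v j ω)^2 ∂μ = 1/3 := fun j => (v_sq_int hv hlaw j).2
    simp_rw [this]
    rw [Finset.sum_const]
    simp only [Finset.card_univ, Fintype.card_fin, nsmul_eq_mul]
    ring
  have hQ1val : ∫ ω, (∑ j, v j ω) ∂μ = (N:ℝ)/2 := by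
    rw [integral_finset_sum _ fun j _ => (v_int hv hlaw j).1]
    have : ∀ j : Fin N, ∫ ω, v j ω ∂μ = 1/2 := fun j => (v_int hv hlaw j).2
    simp_rw [this]
    rw [Finset.sum_const]
    simp only [Finset.card_univ, Fintype.card_fin, nsmul_eq_mul]
    ring
  have hb1 : Integrable (fun ω => (1/(N:ℝ)) * (∑ j, (v j ω)^2)) μ := by
    exact hQ2int.const_mul _
  have hb2 : Integrable (fun ω => (1/(N:ℝ)^2) * (2 * PS ω + ∑ j, v j ω)) μ := by
    exact ((hPSint.const_mul 2).add hQ1int).const_mul _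
  have hb3 : Integrable (fun ω => 2 * PS ω) μ := by exact hPSint.const_mul 2
  have hb4 : Integrable (fun ω => 2 * PS ω + ∑ j, v j ω) μ := by exact hb3.add hQ1int
  have hTval : ∫ ω, T ω ∂μ = 1/(6*(N:ℝ)) := by
    have hshow : (∫ ω, T ω ∂μ) = ∫ ω, ((1/(N:ℝ)) * (∑ j, (v j ω)^2)
        - (1/(N:ℝ)^2) * (2 * PS ω + ∑ j, v j ω) + 1/3) ∂μ := rfl
    rw [hshow, integral_add hTint' (integrable_const _), integral_sub hb1 hb2,
      integral_const_mul, integral_const_mul, integral_add hb3 hQ1int,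
      integral_const_mul, integral_const]
    rw [hPSval, hQ2val, hQ1val]
    simp only [Measure.real, measure_univ, ENNReal.toReal_one, smul_eq_mul, one_mul]
    field_simp
    ring
  have hSval : ∫ ω, S ω ∂μ = 1/(6*(N:ℝ)) := by
    rw [integral_congr_ae hST, hTval]
  -- good event for the pathwise bound
  have hgood : ∀ᵐ ω ∂μ, ∀ i, u ω i ∈ Icc (0:ℝ) 1 := by
    filter_upwards [v_in_Icc hv hlaw] with ω hω i
    obtain ⟨_, σ, hvw⟩ := hord ω
    rw [hvw i]; exact hω (σ i)
  set g : Ω → ℝ := fun ω => (C/c) * S ω + C * c with hgdef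
  have hg1 : Integrable (fun ω => (C/c) * S ω) μ := by exact hSint.const_mul _
  have hgint : Integrable g μ := by exact hg1.add (integrable_const _)
  have hineq : ∀ᵐ ω ∂μ, kl2 (fun s t =>
      interp2 N (fun i j => Wk (u ω i * tN) (u ω j * tN)) s t - Wk (s * tN) (t * tN))
      ≤ g ω := by
    filter_upwards [hgood] with ω hω
    have h1 := omega_bound hN hA htN hWmeas hWlip (u ω) hω
    have h2 : 2 * C * Real.sqrt (S ω) ≤ (C/c) * S ω + C * c := by
      have hs := Real.sq_sqrt (hSnn ω)
      have hsn := Real.sqrt_nonneg (S ω)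
      rw [show (C/c) * S ω + C * c = (C * S ω + C * c^2)/c by field_simp,
        le_div_iff₀ hcpos]
      nlinarith [mul_nonneg hC (sq_nonneg (Real.sqrt (S ω) - c))]
    exact h1.trans h2
  have hnn : ∀ ω, (0:ℝ) ≤ kl2 (fun s t =>
      interp2 N (fun i j => Wk (u ω i * tN) (u ω j * tN)) s t - Wk (s * tN) (t * tN)) :=
    fun ω => Real.sqrt_nonneg _
  calc (∫ ω, kl2 (fun s t =>
        interp2 N (fun i j => Wk (u ω i * tN) (u ω j * tN)) s t - Wk (s * tN) (t * tN)) ∂μ)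
      ≤ ∫ ω, g ω ∂μ :=
        integral_mono_of_nonneg (Filter.Eventually.of_forall hnn) hgint hineq
    _ = (C/c) * (∫ ω, S ω ∂μ) + C * c := by
        have hshow : (∫ ω, g ω ∂μ) = ∫ ω, ((C/c) * S ω + C * c) ∂μ := rfl
        rw [hshow, integral_add hg1 (integrable_const _), integral_const_mul,
          integral_const]
        simp
    _ = 2 * A * tN / Real.sqrt (6 * N) := by
        rw [hSval, ← hcsq]
        have hcc : (C/c) * c^2 + C * c = 2 * C * c := by
          field_simp; ring
        rw [hcc, hCdef, hcdef, one_div, Real.sqrt_inv]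
        rw [div_eq_mul_inv]
        ring

end
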